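/- Let G be a finite p-group with nontrivial cyclic commutator subgroup G' and nilpotency class c > 1. Let N = Z(G) ∩ G'. Then N is nontrivial and cl(G/N) = c − 1. -/

import Mathlib

/-- The nilpotency class of a group, as the least `n` with `γ_{n+1}(G) = 1`,
i.e. the least length of the lower central series. -/
noncomputable def nilClass (G : Type*) [Group G] : ℕ :=
  sInf {n : ℕ | (⊤ : Subgroup G).lowerCentralSeries n = ⊥}

lemma lcs_succ_comm {G : Type*} [Group G] (n : ℕ) :
    (⊤ : Subgroup G).lowerCentralSeries (n + 1) = ⁅(⊤ : Subgroup G).lowerCentralSeries n, (⊤ : Subgroup G)⁆ := rfl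

lemma lowerCentralSeries_map_of_surjective {G H : Type*} [Group G] [Group H]
    (f : G →* H) (hf : Function.Surjective f) (n : ℕ) :
    Subgroup.map f ((⊤ : Subgroup G).lowerCentralSeries n) = (⊤ : Subgroup H).lowerCentralSeries n := by
  induction n with
  | zero => simpa using Subgroup.map_top_of_surjective f hf
  | succ n ih =>
    rw [lcs_succ_comm, lcs_succ_comm, ← ih, ← Subgroup.map_top_of_surjective f hf]
    exact Subgroup.map_commutator _ _ f

/-- Let `G` be a finite `p`-group with nontrivial cyclic commutator subgroup
and nilpotency class `c > 1`. Then `N = Z(G) ∩ G'` is nontrivial and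
`cl(G/N) = c - 1`. -/
theorem nilClass_quotient_center_inter_commutator
    (p : ℕ) [Fact p.Prime] (G : Type*) [Group G] [Finite G] (hG : IsPGroup p G)
    (hcyc : ∃ g : G, commutator G = Subgroup.zpowers g)
    (hne : commutator G ≠ ⊥)
    (c : ℕ) (hc : nilClass G = c) (hc1 : 1 < c) :
    Subgroup.center G ⊓ commutator G ≠ ⊥
    ∧ nilClass (G ⧸ (Subgroup.center G ⊓ commutator G)) = c - 1 := by
  set N := Subgroup.center G ⊓ commutator G with hN
  -- G is nilpotent
  have hnilp : Group.IsNilpotent G := hG.isNilpotent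
  have hSne : {n : ℕ | (⊤ : Subgroup G).lowerCentralSeries n = ⊥}.Nonempty := by
    obtain ⟨n, hn⟩ := Subgroup.nilpotent_iff_lowerCentralSeries.mp hnilp
    exact ⟨n, hn⟩
  have hcmem : (⊤ : Subgroup G).lowerCentralSeries c = ⊥ := by
    have := Nat.sInf_mem hSne
    rwa [show sInf {n : ℕ | (⊤ : Subgroup G).lowerCentralSeries n = ⊥} = c from hc] at this
  have hlt : ∀ m, m < c → (⊤ : Subgroup G).lowerCentralSeries m ≠ ⊥ := by
    intro m hm hmem
    have : c ≤ m := hc ▸ Nat.sInf_le hmem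
    omega
  -- γ_{c-1} ≤ center
  have hcen : (⊤ : Subgroup G).lowerCentralSeries (c - 1) ≤ Subgroup.center G := by
    have : ⁅(⊤ : Subgroup G).lowerCentralSeries (c - 1), (⊤ : Subgroup G)⁆ = ⊥ := by
      rw [← lcs_succ_comm]
      have : c - 1 + 1 = c := by omega
      rw [this]; exact hcmem
    have h := Subgroup.commutator_eq_bot_iff_le_centralizer.mp this
    rwa [Subgroup.coe_top, Subgroup.centralizer_univ] at h
  -- γ_{c-1} ≤ commutator
  have hcomm : (⊤ : Subgroup G).lowerCentralSeries (c - 1) ≤ commutator G := by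
    have := Subgroup.lowerCentralSeries_antitone (⊤ : Subgroup G) (show 1 ≤ c - 1 by omega)
    rwa [Subgroup.top_lowerCentralSeries_one] at this
  have hle : (⊤ : Subgroup G).lowerCentralSeries (c - 1) ≤ N := le_inf hcen hcomm
  have hNne : N ≠ ⊥ := fun h => hlt (c - 1) (by omega) (le_bot_iff.mp (h ▸ hle))
  refine ⟨hNne, ?_⟩
  -- quotient
  have hsurj : Function.Surjective (QuotientGroup.mk' N) := Quotient.mk''_surjective
  have hq : ∀ n, (⊤ : Subgroup (G ⧸ N)).lowerCentralSeries n = ⊥ ↔ (⊤ : Subgroup G).lowerCentralSeries n ≤ N := by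
    intro n
    rw [← lowerCentralSeries_map_of_surjective _ hsurj, Subgroup.map_eq_bot_iff,
      QuotientGroup.ker_mk']
  have key : ∀ m, m < c - 1 → ¬ (⊤ : Subgroup G).lowerCentralSeries m ≤ N := by
    intro m hm hle'
    apply hlt (m + 1) (by omega)
    rw [lcs_succ_comm,
      Subgroup.commutator_eq_bot_iff_le_centralizer, Subgroup.coe_top,
      Subgroup.centralizer_univ]
    exact hle'.trans inf_le_left
  unfold nilClass
  apply le_antisymm
  · exact Nat.sInf_le ((hq (c - 1)).mpr hle)
  · refine le_csInf ?_ ?_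
    · exact ⟨c - 1, (hq (c - 1)).mpr hle⟩
    · intro m hm
      by_contra h
      exact key m (by omega) ((hq m).mp hm)
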